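/- Fix 0 < β < 1 and let f ∈ L¹(−1,1). Define Q_β f(x) := (1/π)·∫_{−1}^{1} (t/(β+tx))·f(t) dt for x ∈ (−β,β). Then for every n ≥ 2 all the series occurring in the iterate T_β^n(Q_β f) converge absolutely at every point, and |T_β^n(Q_β f)(x)| ≤ (4·β^{n−1}/(π(1−β)))·‖f‖_{L¹(−1,1)} for all x ∈ (−1,1). In particular, T_β^n(Q_β f) → 0 geometrically, uniformly on (−1,1), as n → +∞. -/

import Mathlib

set_option maxHeartbeats 1000000

open MeasureTheory Set Filter

/-- The subtransfer operator `T_β f(x) = ∑_{j∈ℤ, j≠0} (β/(x+2j)²) f(-β/(x+2j))`. -/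
noncomputable def Tsub (β : ℝ) (f : ℝ → ℝ) (x : ℝ) : ℝ :=
  ∑' j : {j : ℤ // j ≠ 0},
    (β / (x + 2 * ((j : ℤ) : ℝ)) ^ 2) * f (-β / (x + 2 * ((j : ℤ) : ℝ)))

/-- `Q_β f(x) = (1/π) ∫_{-1}^{1} (t/(β+tx)) f(t) dt`. -/
noncomputable def Qop (β : ℝ) (f : ℝ → ℝ) (x : ℝ) : ℝ :=
  (1 / Real.pi) * ∫ t in Ioo (-1 : ℝ) 1, (t / (β + t * x)) * f t

namespace SubtransferAux

lemma hasSum_tele (c : ℕ → ℝ) (hmono : ∀ n, c (n+1) ≤ c n) (hlim : Tendsto c atTop (nhds 0)) :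
    HasSum (fun n => c n - c (n+1)) (c 0) := by
  rw [hasSum_iff_tendsto_nat_of_nonneg (fun n => sub_nonneg.2 (hmono n))]
  have h : (fun n : ℕ => ∑ i ∈ Finset.range n, (c i - c (i+1))) = fun n => c 0 - c n := by
    funext n; exact Finset.sum_range_sub' c n
  rw [h]
  simpa using tendsto_const_nhds.sub hlim

/-- `∑_{n≥0} 1/((p+2n)(p+2n+2)) = 1/(2p)` for `p > 0`. -/
lemma hasSum_tele2 {p : ℝ} (hp : 0 < p) :
    HasSum (fun n : ℕ => 1/((p + 2*(n:ℝ)) * (p + 2*(n:ℝ) + 2))) (1/(2*p)) := by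
  have hden : ∀ n : ℕ, 0 < p + 2*(n:ℝ) := fun n => by positivity
  have hlim : Tendsto (fun n : ℕ => 1/(2*(p + 2*(n:ℝ)))) atTop (nhds 0) := by
    have h0 : Tendsto (fun n : ℕ => ((n:ℝ))) atTop atTop := tendsto_natCast_atTop_atTop
    have h1 := (h0.const_mul_atTop (show (0:ℝ) < 4 by norm_num)).atTop_add tendsto_const_nhds (C := 2*p)
    exact (h1.congr (fun n => by ring)).inv_tendsto_atTop.congr (fun n => (one_div _).symm)
  have hmono : ∀ n : ℕ, (fun m : ℕ => 1/(2*(p + 2*(m:ℝ)))) (n+1) ≤ 1/(2*(p + 2*(n:ℝ))) := by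
    intro n
    apply one_div_le_one_div_of_le (by positivity)
    push_cast; nlinarith [hden n]
  have h := hasSum_tele (fun n => 1/(2*(p + 2*(n:ℝ)))) hmono hlim
  have heq : (fun n : ℕ => 1/(2*(p + 2*(n:ℝ))) - 1/(2*(p + 2*(((n+1):ℕ):ℝ)))) =
      fun n : ℕ => 1/((p + 2*(n:ℝ)) * (p + 2*(n:ℝ) + 2)) := by
    funext n
    have h1 : (0:ℝ) < p + 2*(n:ℝ) := hden n
    have h2 : (0:ℝ) < p + 2*(n:ℝ) + 2 := by linarith
    push_cast
    field_simp
    ring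
  rw [heq] at h
  simpa using h

lemma hasSum_pm {g : ℤ → ℝ} {a b : ℝ}
    (ha : HasSum (fun n : ℕ => g ((n:ℤ)+1)) a)
    (hb : HasSum (fun n : ℕ => g (-((n:ℤ)+1))) b) :
    HasSum (fun j : {j : ℤ // j ≠ 0} => g j) (a + b) := by
  have h1 : HasSum (fun n : ℕ => Set.indicator {j : ℤ | j ≠ 0} g ((n:ℤ)+1)) a := by
    refine HasSum.congr_fun ha fun n => ?_
    rw [Set.indicator_of_mem (show ((n:ℤ)+1) ∈ {j : ℤ | j ≠ 0} from by intro h; omega) g]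
  have h2 : HasSum (fun n : ℕ => Set.indicator {j : ℤ | j ≠ 0} g (-((n:ℤ)+1))) b := by
    refine HasSum.congr_fun hb fun n => ?_
    rw [Set.indicator_of_mem (show (-((n:ℤ)+1)) ∈ {j : ℤ | j ≠ 0} from by intro h; omega) g]
  have key := HasSum.of_add_one_of_neg_add_one h1 h2
  rw [Set.indicator_of_notMem (by simp) g, add_zero] at key
  exact (hasSum_subtype_iff_indicator).2 key

/-- distance fact: for `x ∈ (-1,1)` and `j ≠ 0`, `(x+2j)² > 1`. -/
lemma one_lt_sq {x : ℝ} (hx1 : -1 < x) (hx2 : x < 1) {j : ℤ} (hj : j ≠ 0) :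
    1 < (x + 2*(j:ℝ))^2 := by
  rcases lt_or_gt_of_ne hj with h | h
  · have hj' : (j:ℝ) ≤ -1 := by exact_mod_cast (by omega : j ≤ -1)
    nlinarith
  · have hj' : (1:ℝ) ≤ (j:ℝ) := by exact_mod_cast (by omega : 1 ≤ j)
    nlinarith

/-- The key telescoping identity: `∑_{j≠0} 1/((x+2j)²-1) = 1/(1-x²)` for `x∈(-1,1)`. -/
lemma hasSum_S1 {x : ℝ} (hx1 : -1 < x) (hx2 : x < 1) :
    HasSum (fun j : {j : ℤ // j ≠ 0} => 1/((x + 2*((j:ℤ):ℝ))^2 - 1)) (1/(1-x^2)) := by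
  have hp1 : (0:ℝ) < x + 1 := by linarith
  have hp2 : (0:ℝ) < 1 - x := by linarith
  have ha := hasSum_tele2 hp1
  have hb := hasSum_tele2 hp2
  have ha' : HasSum (fun n : ℕ => (fun j : ℤ => 1/((x + 2*(j:ℝ))^2 - 1)) ((n:ℤ)+1)) (1/(2*(x+1))) := by
    refine ha.congr_fun fun n => ?_
    push_cast
    have h1 : (0:ℝ) < x + 1 + 2*n := by linarith [Nat.cast_nonneg (α := ℝ) n]
    have h2 : (0:ℝ) < x + 1 + 2*n + 2 := by linarith
    rw [div_eq_div_iff (by nlinarith) (by nlinarith)]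
    ring
  have hb' : HasSum (fun n : ℕ => (fun j : ℤ => 1/((x + 2*(j:ℝ))^2 - 1)) (-((n:ℤ)+1))) (1/(2*(1-x))) := by
    refine hb.congr_fun fun n => ?_
    push_cast
    have h1 : (0:ℝ) < 1 - x + 2*n := by linarith [Nat.cast_nonneg (α := ℝ) n]
    have h2 : (0:ℝ) < 1 - x + 2*n + 2 := by linarith
    rw [div_eq_div_iff (by nlinarith) (by nlinarith)]
    ring
  have h := hasSum_pm (g := fun j : ℤ => 1/((x + 2*(j:ℝ))^2 - 1)) ha' hb'
  have : 1/(2*(x+1)) + 1/(2*(1-x)) = 1/(1-x^2) := by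
    rw [div_add_div _ _ (by nlinarith) (by nlinarith), div_eq_div_iff (by nlinarith) (by nlinarith)]
    ring
  rwa [this] at h


/-- `∑_{j≠0} 1/(x+2j)² ≤ 2` for `x∈(-1,1)`. -/
lemma S2 {x : ℝ} (hx1 : -1 < x) (hx2 : x < 1) :
    ∃ S : ℝ, HasSum (fun j : {j : ℤ // j ≠ 0} => 1/(x + 2*((j:ℤ):ℝ))^2) S ∧ S ≤ 2 := by
  have h2 := hasSum_tele2 (p := 2) (by norm_num)
  have h2v : (1:ℝ)/(2*2) = 1/4 := by norm_num
  rw [h2v] at h2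
  -- plus side
  have hps : ∀ n : ℕ, (0:ℝ) < x + 2*((n:ℝ)+1) := by
    intro n; have := Nat.cast_nonneg (α := ℝ) n; linarith
  have hple : ∀ n : ℕ, 1/(x + 2*(((n:ℝ)+1)+1))^2 ≤ 1/((2 + 2*(n:ℝ)) * (2 + 2*(n:ℝ) + 2)) := by
    intro n
    have hc := Nat.cast_nonneg (α := ℝ) n
    apply one_div_le_one_div_of_le (by nlinarith)
    nlinarith
  have hpsum1 : Summable (fun n : ℕ => 1/(x + 2*(((n:ℝ)+1)+1))^2) := by
    refine Summable.of_nonneg_of_le (fun n => by positivity) hple h2.summable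
  have hpsum : Summable (fun n : ℕ => 1/(x + 2*((n:ℝ)+1))^2) := by
    rw [← summable_nat_add_iff 1]
    exact hpsum1.congr fun n => by push_cast; ring_nf
  have hpbound : ∑' n : ℕ, 1/(x + 2*((n:ℝ)+1))^2 ≤ 1/(x+2)^2 + 1/4 := by
    rw [Summable.tsum_eq_zero_add hpsum]
    have e1 : ∑' n : ℕ, 1/(x + 2*((((n:ℕ)+1:ℕ):ℝ)+1))^2 ≤ 1/4 := by
      rw [← h2.tsum_eq]
      exact Summable.tsum_le_tsum (fun n => by push_cast; exact hple n)
        (hpsum1.congr fun n => by push_cast; ring_nf) h2.summable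
    have e0 : 1/(x + 2*(((0:ℕ):ℝ)+1))^2 = 1/(x+2)^2 := by norm_num
    push_cast at e1 e0 ⊢
    linarith
  -- minus side
  have hms : ∀ n : ℕ, (0:ℝ) < 2*((n:ℝ)+1) - x := by
    intro n; have := Nat.cast_nonneg (α := ℝ) n; linarith
  have hmle : ∀ n : ℕ, 1/(x - 2*(((n:ℝ)+1)+1))^2 ≤ 1/((2 + 2*(n:ℝ)) * (2 + 2*(n:ℝ) + 2)) := by
    intro n
    have hc := Nat.cast_nonneg (α := ℝ) n
    apply one_div_le_one_div_of_le (by nlinarith)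
    nlinarith
  have hmsum1 : Summable (fun n : ℕ => 1/(x - 2*(((n:ℝ)+1)+1))^2) := by
    refine Summable.of_nonneg_of_le (fun n => by positivity) hmle h2.summable
  have hmsum : Summable (fun n : ℕ => 1/(x - 2*((n:ℝ)+1))^2) := by
    rw [← summable_nat_add_iff 1]
    exact hmsum1.congr fun n => by push_cast; ring_nf
  have hmbound : ∑' n : ℕ, 1/(x - 2*((n:ℝ)+1))^2 ≤ 1/(x-2)^2 + 1/4 := by
    rw [Summable.tsum_eq_zero_add hmsum]
    have e1 : ∑' n : ℕ, 1/(x - 2*((((n:ℕ)+1:ℕ):ℝ)+1))^2 ≤ 1/4 := by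
      rw [← h2.tsum_eq]
      exact Summable.tsum_le_tsum (fun n => by push_cast; exact hmle n)
        (hmsum1.congr fun n => by push_cast; ring_nf) h2.summable
    have e0 : 1/(x - 2*(((0:ℕ):ℝ)+1))^2 = 1/(x-2)^2 := by norm_num
    push_cast at e1 e0 ⊢
    linarith
  -- combine
  have hap : HasSum (fun n : ℕ => (fun j : ℤ => 1/(x + 2*(j:ℝ))^2) ((n:ℤ)+1))
      (∑' n : ℕ, 1/(x + 2*((n:ℝ)+1))^2) := by
    refine (hpsum.hasSum).congr_fun fun n => by push_cast; ring_nf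
  have ham : HasSum (fun n : ℕ => (fun j : ℤ => 1/(x + 2*(j:ℝ))^2) (-((n:ℤ)+1)))
      (∑' n : ℕ, 1/(x - 2*((n:ℝ)+1))^2) := by
    refine (hmsum.hasSum).congr_fun fun n => by push_cast; ring_nf
  have h := hasSum_pm (g := fun j : ℤ => 1/(x + 2*(j:ℝ))^2) hap ham
  refine ⟨_, h, ?_⟩
  have hA : (0:ℝ) < (x+2)^2 := by nlinarith
  have hB : (0:ℝ) < (x-2)^2 := by nlinarith
  have key : 1/(x+2)^2 + 1/(x-2)^2 ≤ 3/2 := by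
    rw [div_add_div _ _ hA.ne' hB.ne', div_le_iff₀ (by positivity)]
    nlinarith [sq_nonneg x, sq_nonneg (x*x)]
  linarith


/-- Workhorse: one application of `Tsub` to a function dominated by `C·β/(β²-y²)`. -/
lemma step {β C x : ℝ} (hβ0 : 0 < β) (hβ1 : β < 1) {g : ℝ → ℝ} (hC : 0 ≤ C)
    (hg : ∀ y ∈ Ioo (-β) β, |g y| ≤ C * (β/(β^2 - y^2)))
    (hx1 : -1 < x) (hx2 : x < 1) :
    Summable (fun j : {j : ℤ // j ≠ 0} =>
      |(β / (x + 2 * ((j : ℤ) : ℝ)) ^ 2) * g (-β / (x + 2 * ((j : ℤ) : ℝ)))|) ∧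
    |Tsub β g x| ≤ C * (1/(1-x^2)) := by
  have hterm : ∀ j : {j : ℤ // j ≠ 0},
      |(β / (x + 2 * ((j : ℤ) : ℝ)) ^ 2) * g (-β / (x + 2 * ((j : ℤ) : ℝ)))| ≤
        C * (1/((x + 2*((j:ℤ):ℝ))^2 - 1)) := by
    rintro ⟨j, hj⟩
    set d : ℝ := x + 2*((j:ℤ):ℝ) with hd
    have hd2 : 1 < d^2 := one_lt_sq hx1 hx2 hj
    have hd0 : d ≠ 0 := by intro h; rw [h] at hd2; norm_num at hd2
    have hdabs : 1 < |d| := by nlinarith [sq_abs d, abs_nonneg d]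
    have hy : -β/d ∈ Ioo (-β) β := by
      have habs : |(-β/d)| < β := by
        rw [abs_div, abs_neg, abs_of_pos hβ0, div_lt_iff₀ (by positivity)]
        nlinarith
      exact ⟨neg_lt_of_abs_lt habs, lt_of_abs_lt habs⟩
    have hgb := hg _ hy
    have hwpos : 0 < β / d^2 := by positivity
    calc |(β / d ^ 2) * g (-β/d)| = (β/d^2) * |g (-β/d)| := by
          rw [abs_mul, abs_of_pos hwpos]
      _ ≤ (β/d^2) * (C * (β/(β^2 - (-β/d)^2))) :=
          mul_le_mul_of_nonneg_left hgb (le_of_lt hwpos)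
      _ = C * (1/(d^2 - 1)) := by
          have h1 : β^2 - (-β/d)^2 = β^2*(d^2-1)/d^2 := by field_simp
          rw [h1]
          have h2 : d^2 - 1 ≠ 0 := by nlinarith
          field_simp
  have hS1 := hasSum_S1 hx1 hx2
  have hmaj : Summable (fun j : {j : ℤ // j ≠ 0} => C * (1/((x + 2*((j:ℤ):ℝ))^2 - 1))) :=
    hS1.summable.mul_left C
  have hsum : Summable (fun j : {j : ℤ // j ≠ 0} =>
      |(β / (x + 2 * ((j : ℤ) : ℝ)) ^ 2) * g (-β / (x + 2 * ((j : ℤ) : ℝ)))|) :=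
    Summable.of_nonneg_of_le (fun j => abs_nonneg _) hterm hmaj
  refine ⟨hsum, ?_⟩
  have habs : |Tsub β g x| ≤ ∑' j : {j : ℤ // j ≠ 0},
      |(β / (x + 2 * ((j : ℤ) : ℝ)) ^ 2) * g (-β / (x + 2 * ((j : ℤ) : ℝ)))| := by
    rw [Tsub]
    exact
      norm_tsum_le_tsum_norm (f := fun j : {j : ℤ // j ≠ 0} =>
        (β / (x + 2 * ((j : ℤ) : ℝ)) ^ 2) * g (-β / (x + 2 * ((j : ℤ) : ℝ))))
        (by simpa only [Real.norm_eq_abs] using hsum)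
  have h2 := Summable.tsum_le_tsum hterm hsum hmaj
  have h3 : ∑' j : {j : ℤ // j ≠ 0}, C * (1/((x + 2*((j:ℤ):ℝ))^2 - 1)) = C * (1/(1-x^2)) := by
    rw [tsum_mul_left, hS1.tsum_eq]
  linarith

/-- One application of `Tsub` to a uniformly bounded function. -/
lemma step_flat {β K x : ℝ} (hβ0 : 0 < β) (hβ1 : β < 1) {g : ℝ → ℝ}
    (hg : ∀ y ∈ Ioo (-β) β, |g y| ≤ K) (hx1 : -1 < x) (hx2 : x < 1) :
    |Tsub β g x| ≤ K * (2*β) := by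
  have hK : 0 ≤ K := le_trans (abs_nonneg _) (hg 0 ⟨by linarith, hβ0⟩)
  obtain ⟨S, hS, hS2⟩ := S2 hx1 hx2
  have hSnn : ∀ j : {j : ℤ // j ≠ 0}, (0:ℝ) ≤ 1/(x + 2*((j:ℤ):ℝ))^2 := fun j => by positivity
  have hterm : ∀ j : {j : ℤ // j ≠ 0},
      |(β / (x + 2 * ((j : ℤ) : ℝ)) ^ 2) * g (-β / (x + 2 * ((j : ℤ) : ℝ)))| ≤
        (β*K) * (1/(x + 2*((j:ℤ):ℝ))^2) := by
    rintro ⟨j, hj⟩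
    set d : ℝ := x + 2*((j:ℤ):ℝ) with hd
    have hd2 : 1 < d^2 := one_lt_sq hx1 hx2 hj
    have hd0 : d ≠ 0 := by intro h; rw [h] at hd2; norm_num at hd2
    have hdabs : 1 < |d| := by nlinarith [sq_abs d, abs_nonneg d]
    have hy : -β/d ∈ Ioo (-β) β := by
      have habs : |(-β/d)| < β := by
        rw [abs_div, abs_neg, abs_of_pos hβ0, div_lt_iff₀ (by positivity)]
        nlinarith
      exact ⟨neg_lt_of_abs_lt habs, lt_of_abs_lt habs⟩
    have hwpos : 0 < β / d^2 := by positivity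
    calc |(β / d ^ 2) * g (-β/d)| = (β/d^2) * |g (-β/d)| := by
          rw [abs_mul, abs_of_pos hwpos]
      _ ≤ (β/d^2) * K := mul_le_mul_of_nonneg_left (hg _ hy) (le_of_lt hwpos)
      _ = (β*K) * (1/d^2) := by ring
  have hmaj : Summable (fun j : {j : ℤ // j ≠ 0} => (β*K) * (1/(x + 2*((j:ℤ):ℝ))^2)) :=
    hS.summable.mul_left (β*K)
  have hsum : Summable (fun j : {j : ℤ // j ≠ 0} =>
      |(β / (x + 2 * ((j : ℤ) : ℝ)) ^ 2) * g (-β / (x + 2 * ((j : ℤ) : ℝ)))|) :=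
    Summable.of_nonneg_of_le (fun j => abs_nonneg _) hterm hmaj
  have habs : |Tsub β g x| ≤ ∑' j : {j : ℤ // j ≠ 0},
      |(β / (x + 2 * ((j : ℤ) : ℝ)) ^ 2) * g (-β / (x + 2 * ((j : ℤ) : ℝ)))| := by
    rw [Tsub]
    exact
      norm_tsum_le_tsum_norm (f := fun j : {j : ℤ // j ≠ 0} =>
        (β / (x + 2 * ((j : ℤ) : ℝ)) ^ 2) * g (-β / (x + 2 * ((j : ℤ) : ℝ))))
        (by simpa only [Real.norm_eq_abs] using hsum)
  have h2 := Summable.tsum_le_tsum hterm hsum hmaj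
  have h3 : ∑' j : {j : ℤ // j ≠ 0}, (β*K) * (1/(x + 2*((j:ℤ):ℝ))^2) = (β*K) * S := by
    rw [tsum_mul_left, hS.tsum_eq]
  have h4 : (β*K) * S ≤ (β*K) * 2 := mul_le_mul_of_nonneg_left hS2 (by positivity)
  calc |Tsub β g x| ≤ ∑' j : {j : ℤ // j ≠ 0},
        |(β / (x + 2 * ((j : ℤ) : ℝ)) ^ 2) * g (-β / (x + 2 * ((j : ℤ) : ℝ)))| := habs
    _ ≤ (β*K) * S := by rw [← h3]; exact h2
    _ ≤ (β*K) * 2 := h4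
    _ = K * (2*β) := by ring

/-- Iterated bound on `(-β,β)`. -/
lemma iter_bound {β : ℝ} (hβ0 : 0 < β) (hβ1 : β < 1) {q : ℝ → ℝ} {C : ℝ} (hC : 0 ≤ C)
    (hq : ∀ y ∈ Ioo (-β) β, |q y| ≤ C * (β/(β^2 - y^2))) :
    ∀ k, ∀ y ∈ Ioo (-β) β, |(Tsub β)^[k] q y| ≤ C * β^k * (β/(β^2 - y^2)) := by
  intro k
  induction k with
  | zero => intro y hy; simpa using hq y hy
  | succ k ih =>
    intro y hy
    obtain ⟨hya, hyb⟩ := hy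
    have hy1 : -1 < y := by linarith
    have hy2 : y < 1 := by linarith
    rw [Function.iterate_succ_apply']
    have h := (step hβ0 hβ1 (C := C * β^k) (by positivity) ih hy1 hy2).2
    refine h.trans ?_
    have hysq : y^2 < β^2 := by nlinarith
    have h1 : (0:ℝ) < 1 - y^2 := by nlinarith
    have h2 : (0:ℝ) < β^2 - y^2 := by nlinarith
    have key : 1/(1-y^2) ≤ β^2/(β^2-y^2) := by
      rw [div_le_div_iff₀ h1 h2]
      have hb2 : β^2 ≤ 1 := by nlinarith
      nlinarith [mul_nonneg (sq_nonneg y) (sub_nonneg.2 hb2)]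
    calc C * β^k * (1/(1-y^2)) ≤ C * β^k * (β^2/(β^2-y^2)) :=
          mul_le_mul_of_nonneg_left key (by positivity)
      _ = C * β^(k+1) * (β/(β^2-y^2)) := by ring

/-- Bound for `Q_β f` on `(-β,β)`. -/
lemma Q_bound {β : ℝ} (hβ0 : 0 < β) (hβ1 : β < 1) {f : ℝ → ℝ}
    (hf : IntegrableOn f (Ioo (-1) 1)) :
    ∀ y ∈ Ioo (-β) β, |Qop β f y| ≤
      (2*(∫ t in Ioo (-1:ℝ) 1, |f t|)/Real.pi) * (β/(β^2 - y^2)) := by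
  intro y hy
  obtain ⟨hy1, hy2⟩ := hy
  have hM : 0 ≤ ∫ t in Ioo (-1:ℝ) 1, |f t| := integral_nonneg fun t => abs_nonneg _
  set M := ∫ t in Ioo (-1:ℝ) 1, |f t| with hMdef
  have hyb : |y| < β := abs_lt.2 ⟨hy1, hy2⟩
  have hgap : 0 < β - |y| := by linarith
  have hπ : 0 < Real.pi := Real.pi_pos
  have hbound : ∀ t ∈ Ioo (-1:ℝ) 1, |t/(β + t*y) * f t| ≤ (β - |y|)⁻¹ * |f t| := by
    intro t ht
    obtain ⟨ht1, ht2⟩ := ht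
    have hta : |t| ≤ 1 := le_of_lt (abs_lt.2 ⟨ht1, ht2⟩)
    have hty : |t*y| ≤ |y| := by
      rw [abs_mul]
      nlinarith [abs_nonneg y]
    have hden : β - |y| ≤ β + t*y := by
      have := neg_abs_le (t*y)
      linarith
    have hdenpos : 0 < β + t*y := lt_of_lt_of_le hgap hden
    rw [abs_mul]
    apply mul_le_mul_of_nonneg_right _ (abs_nonneg (f t))
    rw [abs_div, abs_of_pos hdenpos, inv_eq_one_div]
    exact div_le_div₀ (by norm_num) hta hgap hden
  have h1 : |∫ t in Ioo (-1:ℝ) 1, t/(β + t*y) * f t| ≤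
      ∫ t in Ioo (-1:ℝ) 1, |t/(β + t*y) * f t| := by
    simpa only [Real.norm_eq_abs] using
      norm_integral_le_integral_norm (μ := volume.restrict (Ioo (-1:ℝ) 1))
        (f := fun t => t/(β + t*y) * f t)
  have h2 : ∫ t in Ioo (-1:ℝ) 1, |t/(β + t*y) * f t| ≤
      ∫ t in Ioo (-1:ℝ) 1, (β - |y|)⁻¹ * |f t| := by
    apply integral_mono_of_nonneg (Eventually.of_forall fun t => abs_nonneg _)
      ((hf.abs).const_mul _)
    exact (ae_restrict_iff' measurableSet_Ioo).2 (Eventually.of_forall hbound)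
  have h3 : ∫ t in Ioo (-1:ℝ) 1, (β - |y|)⁻¹ * |f t| = (β - |y|)⁻¹ * M := by
    rw [integral_const_mul]
  have hpos2 : 0 < β^2 - y^2 := by nlinarith [sq_abs y, abs_nonneg y]
  have hinv : (β - |y|)⁻¹ ≤ 2*β/(β^2 - y^2) := by
    rw [inv_eq_one_div, div_le_div_iff₀ hgap hpos2]
    nlinarith [sq_nonneg (β - |y|), sq_abs y]
  have hchain : |Qop β f y| ≤ (1/Real.pi) * ((β - |y|)⁻¹ * M) := by
    rw [Qop, abs_mul, abs_of_pos (by positivity : (0:ℝ) < 1/Real.pi)]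
    apply mul_le_mul_of_nonneg_left _ (by positivity)
    calc |∫ t in Ioo (-1:ℝ) 1, t/(β + t*y) * f t| ≤
        ∫ t in Ioo (-1:ℝ) 1, |t/(β + t*y) * f t| := h1
      _ ≤ ∫ t in Ioo (-1:ℝ) 1, (β - |y|)⁻¹ * |f t| := h2
      _ = (β - |y|)⁻¹ * M := h3
  refine hchain.trans ?_
  calc (1/Real.pi) * ((β - |y|)⁻¹ * M) = (M/Real.pi) * (β - |y|)⁻¹ := by ring
    _ ≤ (M/Real.pi) * (2*β/(β^2 - y^2)) :=
        mul_le_mul_of_nonneg_left hinv (by positivity)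
    _ = (2*M/Real.pi) * (β/(β^2 - y^2)) := by ring

end SubtransferAux

/-- For `0 < β < 1` and `f ∈ L¹(-1,1)`, all series occurring in the iterates
`T_β^n (Q_β f)` converge absolutely pointwise, and `|T_β^n (Q_β f)(x)| ≤
(4β^{n-1}/(π(1-β))) ‖f‖_{L¹(-1,1)}` on `(-1,1)` for `n ≥ 2`. -/
theorem subtransfer_iterates_of_Q_decay_geometrically
    (β : ℝ) (hβ0 : 0 < β) (hβ1 : β < 1) (f : ℝ → ℝ)
    (hf : IntegrableOn f (Ioo (-1) 1)) (n : ℕ) (hn : 2 ≤ n) :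
    (∀ k : ℕ, k < n → ∀ x ∈ Ioo (-1 : ℝ) 1,
      Summable (fun j : {j : ℤ // j ≠ 0} =>
        |(β / (x + 2 * ((j : ℤ) : ℝ)) ^ 2) *
          ((Tsub β)^[k] (Qop β f)) (-β / (x + 2 * ((j : ℤ) : ℝ)))|)) ∧
    (∀ x ∈ Ioo (-1 : ℝ) 1,
      |(Tsub β)^[n] (Qop β f) x| ≤
        (4 * β ^ (n - 1) / (Real.pi * (1 - β))) * ∫ t in Ioo (-1 : ℝ) 1, |f t|) := by
  have hM : 0 ≤ ∫ t in Ioo (-1:ℝ) 1, |f t| := integral_nonneg fun t => abs_nonneg _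
  set M := ∫ t in Ioo (-1:ℝ) 1, |f t| with hMdef
  have hπ : 0 < Real.pi := Real.pi_pos
  have hC0 : (0:ℝ) ≤ 2*M/Real.pi := by positivity
  have hQ : ∀ y ∈ Ioo (-β) β, |Qop β f y| ≤ (2*M/Real.pi) * (β/(β^2 - y^2)) :=
    SubtransferAux.Q_bound hβ0 hβ1 hf
  have hiter := SubtransferAux.iter_bound hβ0 hβ1 hC0 hQ
  constructor
  · intro k _ x hx
    exact (SubtransferAux.step hβ0 hβ1 (C := (2*M/Real.pi) * β^k) (by positivity)
      (hiter k) hx.1 hx.2).1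
  · intro x hx
    obtain ⟨m, rfl⟩ : ∃ m, n = m + 2 := ⟨n - 2, by omega⟩
    have h1β : (0:ℝ) < 1 - β := by linarith
    have hG : ∀ y ∈ Ioo (-β) β, |(Tsub β)^[m+1] (Qop β f) y| ≤
        (2*M/Real.pi) * β^m * (1/(1-β)) := by
      intro y hy
      obtain ⟨hya, hyb⟩ := hy
      have hy1 : (-1:ℝ) < y := by linarith
      have hy2 : y < 1 := by linarith
      rw [Function.iterate_succ_apply']
      have h := (SubtransferAux.step hβ0 hβ1 (C := (2*M/Real.pi) * β^m) (by positivity)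
        (hiter m) hy1 hy2).2
      refine h.trans ?_
      have hysq : y^2 < β^2 := by nlinarith
      have hb2 : β^2 < β := by nlinarith
      have key : 1/(1-y^2) ≤ 1/(1-β) := by
        apply one_div_le_one_div_of_le h1β
        nlinarith
      exact mul_le_mul_of_nonneg_left key (by positivity)
    rw [Function.iterate_succ_apply']
    have hfin := SubtransferAux.step_flat hβ0 hβ1 hG hx.1 hx.2
    refine hfin.trans (le_of_eq ?_)
    have hn1 : (m + 2) - 1 = m + 1 := by omega
    rw [hn1, pow_succ]
    field_simp
    ring
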